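/- As |z| → ∞ in ℂ, the principal argument satisfies arg(z − 1) = arg(z) + sin(arg z)/|z| + O(|z|^{−2}); precisely, the function z ↦ arg(z − 1) − arg(z) − sin(arg z)/|z| is big-O of z ↦ |z|^{−2} along the cobounded filter of ℂ. -/

import Mathlib

open Asymptotics
open Real (pi_pos)
local notation "π" => Real.pi

/-- `|arctan t - t| ≤ |t|^3`. -/
lemma arctan_sub_self_abs_le (t : ℝ) : |Real.arctan t - t| ≤ |t| ^ 3 := by
  have h1 : Real.arctan t - t = ∫ s in (0:ℝ)..t, (1 / (1 + s ^ 2) - 1) := by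
    rw [intervalIntegral.integral_sub]
    · rw [integral_one_div_one_add_sq]
      simp
    · exact (Continuous.intervalIntegrable
        (continuous_const.div (by continuity) (fun s => by positivity)) _ _)
    · exact intervalIntegrable_const
  have h2 : ∀ s ∈ Set.uIoc (0:ℝ) t, ‖(1 / (1 + s ^ 2) - 1)‖ ≤ t ^ 2 := by
    intro s hs
    have hs' : |s| ≤ |t| := by
      rcases Set.mem_uIoc.1 hs with h | h
      · rw [abs_of_pos h.1, abs_of_nonneg (h.1.le.trans h.2)]; exact h.2
      · have ht : t < 0 := lt_of_lt_of_le h.1 h.2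
        rw [abs_of_nonpos h.2, abs_of_neg ht]; linarith [h.1]
    have hpos : (0:ℝ) < 1 + s ^ 2 := by positivity
    have : 1 / (1 + s ^ 2) - 1 = -(s ^ 2 / (1 + s ^ 2)) := by field_simp; ring
    rw [this, norm_neg, Real.norm_eq_abs, abs_of_nonneg (by positivity)]
    calc s ^ 2 / (1 + s ^ 2) ≤ s ^ 2 := by
          apply div_le_self (sq_nonneg s); nlinarith [sq_nonneg s]
      _ ≤ t ^ 2 := by
          rw [← sq_abs s, ← sq_abs t]; exact pow_le_pow_left₀ (abs_nonneg s) hs' 2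
  calc |Real.arctan t - t| = ‖∫ s in (0:ℝ)..t, (1 / (1 + s ^ 2) - 1)‖ := by
        rw [h1]; rfl
    _ ≤ t ^ 2 * |t - 0| := intervalIntegral.norm_integral_le_of_norm_le_const h2
    _ = |t| ^ 3 := by rw [sub_zero, ← sq_abs t]; ring

open Complex in
/-- `arg(1 - w)` is `-Im w` up to `O(|w|^2)` for `|w| ≤ 1/2`. -/
lemma arg_one_sub_bound (w : ℂ) (hw : ‖w‖ ≤ 1 / 2) :
    |Complex.arg (1 - w) + w.im| ≤ 6 * ‖w‖ ^ 2 := by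
  have hre : (1 - w).re = 1 - w.re := by simp
  have him : (1 - w).im = -w.im := by simp
  have hwre : |w.re| ≤ ‖w‖ := Complex.abs_re_le_norm w
  have hwim : |w.im| ≤ ‖w‖ := Complex.abs_im_le_norm w
  have hx : (1:ℝ) / 2 ≤ (1 - w).re := by
    rw [hre]
    have := abs_le.1 hwre
    linarith
  have hxpos : (0:ℝ) < (1 - w).re := by linarith
  have harg : Complex.arg (1 - w) = Real.arctan ((1 - w).im / (1 - w).re) := by
    have h2 : |Complex.arg (1 - w)| < π / 2 :=
      abs_arg_lt_pi_div_two_iff.2 (Or.inl hxpos)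
    rw [← Complex.tan_arg]
    exact (Real.arctan_tan (by linarith [abs_lt.1 h2 |>.1]) (abs_lt.1 h2).2).symm
  set t : ℝ := (1 - w).im / (1 - w).re with ht
  have habs_t : |t| ≤ 2 * ‖w‖ := by
    rw [ht, abs_div, him, abs_neg]
    rw [div_le_iff₀ (lt_of_lt_of_le one_half_pos hx |>.trans_le (le_abs_self _))]
    calc |w.im| ≤ ‖w‖ := hwim
      _ = 2 * ‖w‖ * (1/2) := by ring
      _ ≤ 2 * ‖w‖ * |(1 - w).re| := by
          apply mul_le_mul_of_nonneg_left _ (by positivity)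
          rw [abs_of_pos hxpos]; exact hx
  have h1 : |Real.arctan t - t| ≤ 4 * ‖w‖ ^ 2 := by
    calc |Real.arctan t - t| ≤ |t| ^ 3 := arctan_sub_self_abs_le t
      _ ≤ (2 * ‖w‖) ^ 3 :=
          pow_le_pow_left₀ (abs_nonneg t) habs_t 3
      _ = 8 * ‖w‖ * ‖w‖ ^ 2 := by ring
      _ ≤ 8 * (1/2) * ‖w‖ ^ 2 := by nlinarith [norm_nonneg w]
      _ = 4 * ‖w‖ ^ 2 := by ring
  have h2 : |t + w.im| ≤ 2 * ‖w‖ ^ 2 := by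
    have hxne : (1 - w).re ≠ 0 := ne_of_gt hxpos
    have : t + w.im = -(w.im * w.re) / (1 - w).re := by
      have hxne' : (1:ℝ) - w.re ≠ 0 := hre ▸ hxne
      rw [ht, him, hre]
      field_simp
      ring
    rw [this, abs_div, abs_neg, abs_mul, _root_.abs_of_pos hxpos, div_le_iff₀ hxpos]
    calc |w.im| * |w.re| ≤ ‖w‖ * ‖w‖ :=
          mul_le_mul hwim hwre (abs_nonneg _) (norm_nonneg w)
      _ = 2 * ‖w‖ ^ 2 * (1/2) := by ring
      _ ≤ 2 * ‖w‖ ^ 2 * (1 - w).re := by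
          apply mul_le_mul_of_nonneg_left hx (by positivity)
  calc |Complex.arg (1 - w) + w.im| = |(Real.arctan t - t) + (t + w.im)| := by
        rw [harg]; ring_nf
    _ ≤ |Real.arctan t - t| + |t + w.im| := abs_add_le _ _
    _ ≤ 4 * ‖w‖ ^ 2 + 2 * ‖w‖ ^ 2 := add_le_add h1 h2
    _ = 6 * ‖w‖ ^ 2 := by ring

open Complex in
lemma arg_diff_eq (z : ℂ) (hz : 2 ≤ ‖z‖) :
    Complex.arg (z - 1) - Complex.arg z = Complex.arg (1 - z⁻¹) := by
  have hz0 : z ≠ 0 := by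
    intro h; rw [h] at hz; simp at hz; linarith
  have hz1 : z - 1 ≠ 0 := by
    intro h
    have : z = 1 := by linear_combination h
    rw [this] at hz; norm_num at hz
  have hIoc : Complex.arg (z - 1) - Complex.arg z ∈ Set.Ioc (-π) π := by
    have him : (z - 1).im = z.im := by simp
    rcases lt_trichotomy z.im 0 with h | h | h
    · have ha1 : Complex.arg (z - 1) < 0 := arg_neg_iff.2 (him ▸ h)
      have ha2 : Complex.arg z < 0 := arg_neg_iff.2 h
      have hb1 := neg_pi_lt_arg (z - 1)
      have hb2 := neg_pi_lt_arg z
      exact ⟨by linarith, by linarith⟩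
    · have habs2 : 2 ≤ |z.re| := by
        have := Complex.norm_le_abs_re_add_abs_im z
        rw [h] at this; simp at this; linarith
      rcases le_or_gt 0 z.re with hr | hr
      · have h2 : (2:ℝ) ≤ z.re := by rwa [_root_.abs_of_nonneg hr] at habs2
        have e1 : Complex.arg z = 0 := arg_eq_zero_iff.2 ⟨hr, h⟩
        have e2 : Complex.arg (z - 1) = 0 :=
          arg_eq_zero_iff.2 ⟨by simp only [Complex.sub_re, Complex.one_re]; linarith, him ▸ h⟩
        rw [e1, e2, sub_self]
        exact ⟨by linarith [Real.pi_pos], by linarith [Real.pi_pos]⟩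
      · have e1 : Complex.arg z = π := arg_eq_pi_iff.2 ⟨hr, h⟩
        have e2 : Complex.arg (z - 1) = π :=
          arg_eq_pi_iff.2 ⟨by simp only [Complex.sub_re, Complex.one_re]; linarith, him ▸ h⟩
        rw [e1, e2, sub_self]
        exact ⟨by linarith [Real.pi_pos], by linarith [Real.pi_pos]⟩
    · have ha1 : 0 ≤ Complex.arg (z - 1) := arg_nonneg_iff.2 (him ▸ h.le)
      have ha2 : 0 ≤ Complex.arg z := arg_nonneg_iff.2 h.le
      have hb1 : Complex.arg (z - 1) < π := arg_lt_pi_iff.2 (Or.inr (him ▸ h.ne'))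
      have hb2 : Complex.arg z < π := arg_lt_pi_iff.2 (Or.inr h.ne')
      exact ⟨by linarith, by linarith⟩
  have h1 : (1 - z⁻¹) = (z - 1) / z := by field_simp
  symm
  calc Complex.arg (1 - z⁻¹) = Complex.arg ((z - 1) / z) := by rw [h1]
    _ = ((Complex.arg ((z - 1) / z) : Real.Angle)).toReal :=
        (arg_coe_angle_toReal_eq_arg _).symm
    _ = (((Complex.arg (z - 1) - Complex.arg z : ℝ)) : Real.Angle).toReal := by
        rw [arg_div_coe_angle hz1 hz0, Real.Angle.coe_sub]
    _ = Complex.arg (z - 1) - Complex.arg z :=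
        Real.Angle.toReal_coe_eq_self_iff_mem_Ioc.2 hIoc

/-- As `|z| → ∞`, `arg(z − 1) = arg(z) + sin(arg z)/|z| + O(|z|⁻²)`. -/
theorem arg_sub_one_asymptotics :
    (fun z : ℂ =>
        Complex.arg (z - 1) - Complex.arg z - Real.sin (Complex.arg z) / ‖z‖)
      =O[Bornology.cobounded ℂ] fun z : ℂ => (‖z‖ ^ 2)⁻¹ := by
  rw [isBigO_iff]
  refine ⟨6, ?_⟩
  filter_upwards [eventually_cobounded_le_norm (2 : ℝ)] with z hz
  have habs : 2 ≤ ‖z‖ := hz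
  have hz0 : z ≠ 0 := by
    intro h; rw [h] at habs; simp at habs; linarith
  have habspos : (0:ℝ) < ‖z‖ := by linarith
  have hw : ‖z⁻¹‖ ≤ 1 / 2 := by
    rw [norm_inv]
    rw [inv_le_comm₀ (by linarith) one_half_pos]
    simpa using habs
  have heq : Complex.arg (z - 1) - Complex.arg z -
      Real.sin (Complex.arg z) / ‖z‖
      = Complex.arg (1 - z⁻¹) + (z⁻¹).im := by
    rw [arg_diff_eq z habs, Complex.sin_arg, Complex.inv_im,
      ← Complex.sq_norm]
    field_simp
    ring
  rw [heq]
  have := arg_one_sub_bound z⁻¹ hw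
  rw [norm_inv] at this
  calc ‖Complex.arg (1 - z⁻¹) + (z⁻¹).im‖ ≤ 6 * ‖z‖⁻¹ ^ 2 := this
    _ = 6 * ‖(‖z‖ ^ 2)⁻¹‖ := by
        rw [Real.norm_eq_abs, abs_of_pos (by positivity), inv_pow]
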